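/- For every positive integer k there exists a real polynomial P of degree k + 1 with P(0) = 0 such that for every function f : ℝ → ℂ that is (k+1) times continuously differentiable and such that, for each ℓ ∈ {0, 1, …, k+1}, the function t ↦ t^ℓ f^{(ℓ)}(t) is Lebesgue integrable on ℝ and tends to 0 as |t| → ∞, and for every real v ≠ 0, one has ∫_ℝ f(t) cos(vt) dt = ∫_ℝ (P(𝒪)f)(t) 𝒥_{k+1/2}(tv) dt. -/

import Mathlib

open MeasureTheory Filter intervalIntegral Set

/-- The iterates of the operator `(1/s) d/ds` applied to `sin s / s`. -/
noncomputable def besselIter : ℕ → (ℝ → ℝ)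
  | 0 => fun s => Real.sin s / s
  | (k + 1) => fun s => (1 / s) * deriv (besselIter k) s

/-- The modified Bessel-type function
`𝒥_{k+1/2}(s) = √(2/π) (−1)^k ((1/s) d/ds)^k (sin s / s)`,
which equals `J_{k+1/2}(s)/s^{k+1/2}` for `s > 0`. -/
noncomputable def Jmod (k : ℕ) (s : ℝ) : ℝ :=
  Real.sqrt (2 / Real.pi) * (-1 : ℝ) ^ k * besselIter k s

/-- For a real polynomial `P(x) = Σ aₘ xᵐ` and `f : ℝ → ℂ`, the function
`(P(𝒪)f)(t) = Σ aₘ tᵐ f^{(m)}(t)`, i.e. `xᵐ` is replaced by `𝒪^m = tᵐ Dᵐ`. -/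
noncomputable def PopC (P : Polynomial ℝ) (f : ℝ → ℂ) (t : ℝ) : ℂ :=
  ∑ m ∈ Finset.range (P.natDegree + 1),
    (P.coeff m : ℂ) * (t : ℂ) ^ m * iteratedDeriv m f t


lemma abs_sin_le_one' (x : ℝ) : |Real.sin x| ≤ 1 :=
  abs_le.2 ⟨Real.neg_one_le_sin x, Real.sin_le_one x⟩

lemma abs_cos_le_one' (x : ℝ) : |Real.cos x| ≤ 1 :=
  abs_le.2 ⟨Real.neg_one_le_cos x, Real.cos_le_one x⟩

lemma mem_Ioc_of_uIoc {x : ℝ} (hx : x ∈ Set.uIoc (-1:ℝ) 1) : x ∈ Set.Ioc (-1:ℝ) 1 := by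
  simpa [Set.uIoc_of_le (by norm_num : (-1:ℝ) ≤ 1)] using hx

lemma aux_abs_le {x : ℝ} (hx : x ∈ Set.Ioc (-1:ℝ) 1) (j : ℕ) :
    |(1-x^2)^j| ≤ 1 := by
  have h1 : |x| ≤ 1 := abs_le.2 ⟨hx.1.le, hx.2⟩
  have h2 : (0:ℝ) ≤ 1 - x^2 := by nlinarith [sq_abs x, h1, abs_nonneg x]
  have h3 : (1 - x^2 : ℝ) ≤ 1 := by nlinarith [sq_nonneg x]
  rw [abs_of_nonneg (pow_nonneg h2 j)]
  exact pow_le_one₀ h2 h3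

noncomputable def Gb (j : ℕ) (s : ℝ) : ℝ := ∫ x in (-1:ℝ)..1, (1-x^2)^j * Real.cos (s*x)

noncomputable def AInt (j : ℕ) (s : ℝ) : ℝ := ∫ x in (-1:ℝ)..1, x * (1-x^2)^j * Real.sin (s*x)

lemma hasDerivAt_Gb (j : ℕ) (s₀ : ℝ) : HasDerivAt (Gb j) (-(AInt j s₀)) s₀ := by
  have key : HasDerivAt (fun s => Gb j s)
      (∫ x in (-1:ℝ)..1, (1-x^2)^j * (-Real.sin (s₀*x) * x)) s₀ := by
    refine (intervalIntegral.hasDerivAt_integral_of_dominated_loc_of_deriv_le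
      (F := fun s x => (1-x^2)^j * Real.cos (s*x))
      (F' := fun s x => (1-x^2)^j * (-Real.sin (s*x) * x))
      (bound := fun _ => 1) (s := Set.univ) Filter.univ_mem ?_ ?_ ?_ ?_ ?_ ?_).2
    · filter_upwards with s using
        (Continuous.aestronglyMeasurable (by fun_prop))
    · exact (Continuous.intervalIntegrable (by fun_prop)) _ _
    · exact Continuous.aestronglyMeasurable (by fun_prop)
    · filter_upwards with x hx u _
      have hx' := mem_Ioc_of_uIoc hx
      have h1 : |x| ≤ 1 := abs_le.2 ⟨hx'.1.le, hx'.2⟩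
      calc ‖(1-x^2)^j * (-Real.sin (u*x) * x)‖
          = |(1-x^2)^j| * (|Real.sin (u*x)| * |x|) := by
            simp [abs_mul]
        _ ≤ 1 * (1 * 1) := by
            gcongr
            · exact aux_abs_le hx' j
            · exact abs_sin_le_one' _
        _ = 1 := by norm_num
    · exact intervalIntegrable_const
    · filter_upwards with x _ u _
      have : HasDerivAt (fun u : ℝ => Real.cos (u*x)) (-Real.sin (u*x) * x) u :=
        by have := (Real.hasDerivAt_cos (u*x)).comp u (hasDerivAt_mul_const x); exact this
      exact this.const_mul _
  convert key using 1
  rw [AInt, ← intervalIntegral.integral_neg]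
  congr 1; funext x; ring

lemma Gb_cont (j : ℕ) : Continuous (Gb j) :=
  continuous_iff_continuousAt.2 fun s => (hasDerivAt_Gb j s).continuousAt

lemma abs_Gb_le (j : ℕ) (s : ℝ) : |Gb j s| ≤ 2 := by
  have := intervalIntegral.norm_integral_le_of_norm_le_const
    (C := 1) (f := fun x => (1-x^2)^j * Real.cos (s*x)) (a := (-1:ℝ)) (b := 1) ?_
  · calc |Gb j s| ≤ 1 * |(1:ℝ) - (-1)| := this
      _ = 2 := by norm_num
  · intro x hx
    have hx' := mem_Ioc_of_uIoc hx
    calc ‖(1-x^2)^j * Real.cos (s*x)‖ = |(1-x^2)^j| * |Real.cos (s*x)| := abs_mul _ _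
      _ ≤ 1 * 1 := by
          gcongr
          · exact aux_abs_le hx' j
          · exact abs_cos_le_one' _
      _ = 1 := by norm_num

lemma abs_AInt_le (j : ℕ) (s : ℝ) : |AInt j s| ≤ 2 := by
  have := intervalIntegral.norm_integral_le_of_norm_le_const
    (C := 1) (f := fun x => x * (1-x^2)^j * Real.sin (s*x)) (a := (-1:ℝ)) (b := 1) ?_
  · calc |AInt j s| ≤ 1 * |(1:ℝ) - (-1)| := this
      _ = 2 := by norm_num
  · intro x hx
    have hx' := mem_Ioc_of_uIoc hx
    have h1 : |x| ≤ 1 := abs_le.2 ⟨hx'.1.le, hx'.2⟩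
    calc ‖x * (1-x^2)^j * Real.sin (s*x)‖
        = |x| * |(1-x^2)^j| * |Real.sin (s*x)| := by simp [abs_mul]
      _ ≤ 1 * 1 * 1 := by
          gcongr <;> first
            | exact h1
            | exact aux_abs_le hx' j
            | exact abs_sin_le_one' _
      _ = 1 := by norm_num

lemma hasDerivAt_sin_mul (s x : ℝ) :
    HasDerivAt (fun x : ℝ => Real.sin (s*x)) (Real.cos (s*x) * s) x := by
  simpa [Function.comp_def] using (Real.hasDerivAt_sin (s*x)).comp x ((hasDerivAt_id x).const_mul s)

lemma hasDerivAt_cos_mul (s x : ℝ) :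
    HasDerivAt (fun x : ℝ => Real.cos (s*x)) (-Real.sin (s*x) * s) x := by
  simpa [Function.comp_def] using (Real.hasDerivAt_cos (s*x)).comp x ((hasDerivAt_id x).const_mul s)

lemma hasDerivAt_one_sub_sq_pow (j : ℕ) (x : ℝ) :
    HasDerivAt (fun x : ℝ => (1-x^2)^j) ((j:ℝ) * (1-x^2)^(j-1) * (-(2*x))) x := by
  have h1 : HasDerivAt (fun x : ℝ => 1 - x^2) (-(2*x)) x := by
    simpa using (hasDerivAt_pow 2 x).const_sub 1
  exact h1.pow j

lemma L1 (j : ℕ) (s : ℝ) : s * Gb (j+1) s = (2*(j:ℝ)+2) * AInt j s := by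
  have hF : ∀ x : ℝ, HasDerivAt (fun x : ℝ => (1-x^2)^(j+1) * Real.sin (s*x))
      (s * ((1-x^2)^(j+1) * Real.cos (s*x)) - (2*(j:ℝ)+2) * (x * (1-x^2)^j * Real.sin (s*x))) x := by
    intro x
    have := (hasDerivAt_one_sub_sq_pow (j+1) x).mul (hasDerivAt_sin_mul s x)
    refine this.congr_deriv ?_
    push_cast
    ring
  have hint : IntervalIntegrable (fun x : ℝ =>
      s * ((1-x^2)^(j+1) * Real.cos (s*x)) - (2*(j:ℝ)+2) * (x * (1-x^2)^j * Real.sin (s*x)))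
      volume (-1) 1 := (Continuous.intervalIntegrable (by fun_prop)) _ _
  have hFTC := intervalIntegral.integral_eq_sub_of_hasDerivAt (fun x _ => hF x) hint
  have hzero : (∫ x in (-1:ℝ)..1,
      (s * ((1-x^2)^(j+1) * Real.cos (s*x)) - (2*(j:ℝ)+2) * (x * (1-x^2)^j * Real.sin (s*x)))) = 0 := by
    rw [hFTC]; norm_num
  rw [intervalIntegral.integral_sub ((Continuous.intervalIntegrable (by fun_prop)) _ _)
      ((Continuous.intervalIntegrable (by fun_prop)) _ _),
    intervalIntegral.integral_const_mul, intervalIntegral.integral_const_mul] at hzero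
  have : s * Gb (j+1) s - (2*(j:ℝ)+2) * AInt j s = 0 := by
    rw [Gb, AInt]; linarith [hzero]
  linarith [this]

lemma L2 (j : ℕ) (s : ℝ) :
    s * AInt (j+1) s = (2*(j:ℝ)+3) * Gb (j+1) s - (2*(j:ℝ)+2) * Gb j s := by
  have hF : ∀ x : ℝ, HasDerivAt (fun x : ℝ => x * (1-x^2)^(j+1) * Real.cos (s*x))
      (((1-x^2)^(j+1) * Real.cos (s*x)
        - (2*(j:ℝ)+2) * (x^2 * (1-x^2)^j * Real.cos (s*x)))
        - s * (x * (1-x^2)^(j+1) * Real.sin (s*x))) x := by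
    intro x
    have := ((hasDerivAt_id' x).mul (hasDerivAt_one_sub_sq_pow (j+1) x)).mul
      (hasDerivAt_cos_mul s x)
    refine this.congr_deriv ?_
    simp only [Pi.mul_apply]
    push_cast
    ring
  have hint : IntervalIntegrable (fun x : ℝ =>
      ((1-x^2)^(j+1) * Real.cos (s*x)
        - (2*(j:ℝ)+2) * (x^2 * (1-x^2)^j * Real.cos (s*x)))
        - s * (x * (1-x^2)^(j+1) * Real.sin (s*x))) volume (-1:ℝ) 1 :=
    (Continuous.intervalIntegrable (by fun_prop)) (-1) 1
  have hFTC := intervalIntegral.integral_eq_sub_of_hasDerivAt (fun x _ => hF x) hint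
  have hzero : (∫ x in (-1:ℝ)..1,
      (((1-x^2)^(j+1) * Real.cos (s*x)
        - (2*(j:ℝ)+2) * (x^2 * (1-x^2)^j * Real.cos (s*x)))
        - s * (x * (1-x^2)^(j+1) * Real.sin (s*x)))) = 0 := by
    rw [hFTC]; norm_num
  have hsplit : ∀ x : ℝ, x^2 * (1-x^2)^j * Real.cos (s*x)
      = (1-x^2)^j * Real.cos (s*x) - (1-x^2)^(j+1) * Real.cos (s*x) := by
    intro x; ring
  rw [intervalIntegral.integral_sub (by exact (Continuous.intervalIntegrable (by fun_prop)) _ _)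
      (by exact (Continuous.intervalIntegrable (by fun_prop)) _ _),
    intervalIntegral.integral_sub (by exact (Continuous.intervalIntegrable (by fun_prop)) _ _)
      (by exact (Continuous.intervalIntegrable (by fun_prop)) _ _),
    intervalIntegral.integral_const_mul, intervalIntegral.integral_const_mul] at hzero
  have hx2 : (∫ x in (-1:ℝ)..1, x^2 * (1-x^2)^j * Real.cos (s*x)) = Gb j s - Gb (j+1) s := by
    rw [Gb, Gb, ← intervalIntegral.integral_sub
      ((Continuous.intervalIntegrable (by fun_prop)) _ _)
      ((Continuous.intervalIntegrable (by fun_prop)) _ _)]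
    congr 1; funext x; ring
  have e1 : (∫ x in (-1:ℝ)..1, (1-x^2)^(j+1) * Real.cos (s*x)) = Gb (j+1) s := rfl
  have e2 : (∫ x in (-1:ℝ)..1, x * (1-x^2)^(j+1) * Real.sin (s*x)) = AInt (j+1) s := rfl
  rw [hx2, e1, e2] at hzero
  linarith [hzero]

lemma abs_mul_Gb_le (j : ℕ) (s : ℝ) : |s * Gb (j+1) s| ≤ 2*(2*(j:ℝ)+2) := by
  rw [L1]
  rw [abs_mul]
  have h1 : |2*(j:ℝ)+2| = 2*(j:ℝ)+2 := abs_of_nonneg (by positivity)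
  rw [h1, mul_comm]
  have := abs_AInt_le j s
  have hj : (0:ℝ) ≤ 2*(j:ℝ)+2 := by positivity
  nlinarith [abs_nonneg (AInt j s)]

noncomputable def wgt (j : ℕ) : ℝ := (-1:ℝ)^j / (2^(j+1) * (j.factorial : ℝ))

lemma Gb_zero_eq (s : ℝ) (hs : s ≠ 0) : Gb 0 s = 2 * (Real.sin s / s) := by
  have hF : ∀ x : ℝ, HasDerivAt (fun x : ℝ => Real.sin (s*x) * s⁻¹)
      ((1-x^2)^0 * Real.cos (s*x)) x := by
    intro x
    have := (hasDerivAt_sin_mul s x).mul_const s⁻¹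
    refine this.congr_deriv ?_
    field_simp
  have hint : IntervalIntegrable (fun x : ℝ => (1-x^2)^0 * Real.cos (s*x)) volume (-1:ℝ) 1 :=
    (Continuous.intervalIntegrable (by fun_prop)) _ _
  have hFTC := intervalIntegral.integral_eq_sub_of_hasDerivAt (fun x _ => hF x) hint
  rw [Gb, hFTC]
  rw [mul_one]
  rw [mul_neg_one (a := s)]
  rw [Real.sin_neg]
  field_simp
  ring

lemma besselIter_eq_Gb : ∀ (j : ℕ) (s : ℝ), s ≠ 0 → besselIter j s = wgt j * Gb j s := by
  intro j
  induction j with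
  | zero =>
    intro s hs
    rw [besselIter, wgt, Gb_zero_eq s hs]
    norm_num
    ring
  | succ j ih =>
    intro s hs
    have hev : besselIter j =ᶠ[nhds s] fun u => wgt j * Gb j u := by
      filter_upwards [isOpen_compl_singleton.mem_nhds (by simpa using hs :
        s ∈ ({0}ᶜ : Set ℝ))] with u hu
      exact ih u (by simpa using hu)
    have hder : deriv (besselIter j) s = wgt j * (-(AInt j s)) := by
      rw [hev.deriv_eq]
      exact (((hasDerivAt_Gb j s).const_mul (wgt j))).deriv
    show (1 / s) * deriv (besselIter j) s = _
    rw [hder]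
    have hA : AInt j s = s * Gb (j+1) s / (2*(j:ℝ)+2) := by
      rw [L1]
      field_simp
    rw [hA]
    rw [wgt, wgt]
    have h2 : ((j:ℝ)+1) ≠ 0 := by positivity
    have hfac : ((j.factorial : ℝ)) ≠ 0 := Nat.cast_ne_zero.2 (Nat.factorial_ne_zero j)
    field_simp [Nat.factorial_succ, pow_succ]
    rw [Nat.factorial_succ]; push_cast; ring

noncomputable def bc : ℕ → ℕ → ℝ
  | 0, m => if m = 1 then -1 else 0
  | (j+1), m => (if m = 0 then 0 else bc j (m-1)) + ((m:ℝ) - (2*(j:ℝ)+2)) * bc j m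

lemma bc_zero (j : ℕ) : bc j 0 = 0 := by
  induction j with
  | zero => simp [bc]
  | succ j ih => simp [bc, ih]

lemma bc_big : ∀ (j m : ℕ), j+2 ≤ m → bc j m = 0 := by
  intro j
  induction j with
  | zero => intro m hm; simp only [bc]; rw [if_neg (by omega)]
  | succ j ih =>
    intro m hm
    have h1 : bc j (m-1) = 0 := ih (m-1) (by omega)
    have h2 : bc j m = 0 := ih m (by omega)
    simp [bc, h1, h2]

lemma bc_top (j : ℕ) : bc j (j+1) = -1 := by
  induction j with
  | zero => simp [bc]
  | succ j ih =>
    have h2 : bc j (j+2) = 0 := bc_big j (j+2) le_rfl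
    simp only [bc]
    rw [show (j+1+1) - 1 = j+1 from rfl, ih, h2]
    push_cast
    ring

noncomputable def Sfun (f : ℝ → ℂ) (j : ℕ) (t : ℝ) : ℂ :=
  ∑ m ∈ Finset.range (j+2), (bc j m : ℂ) * (t:ℂ)^m * iteratedDeriv m f t

noncomputable def Sd (f : ℝ → ℂ) (j : ℕ) (t : ℝ) : ℂ :=
  ∑ m ∈ Finset.range (j+2), (bc j m : ℂ) *
    ((m:ℂ) * (t:ℂ)^(m-1) * iteratedDeriv m f t + (t:ℂ)^m * iteratedDeriv (m+1) f t)

lemma cast_mul_pow_sub_one (m : ℕ) (t : ℂ) : (m:ℂ) * t^(m-1) * t = (m:ℂ) * t^m := by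
  cases m with
  | zero => simp
  | succ m => rw [Nat.add_sub_cancel, mul_assoc, ← pow_succ]

lemma Skey (f : ℝ → ℂ) (j : ℕ) (t : ℝ) :
    Sfun f (j+1) t = (t:ℂ) * Sd f j t - (2*(j:ℂ)+2) * Sfun f j t := by
  have h1 : Sfun f (j+1) t =
      (∑ i ∈ Finset.range (j+2), (bc j i : ℂ) * ((t:ℂ)^(i+1) * iteratedDeriv (i+1) f t))
      + ∑ i ∈ Finset.range (j+2),
          (((i:ℂ) - (2*(j:ℂ)+2)) * (bc j i : ℂ)) * ((t:ℂ)^i * iteratedDeriv i f t) := by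
    rw [Sfun]
    have hsplit : ∀ m ∈ Finset.range (j+3),
        (bc (j+1) m : ℂ) * (t:ℂ)^m * iteratedDeriv m f t
        = (((if m = 0 then (0:ℝ) else bc j (m-1)) : ℝ) : ℂ) * ((t:ℂ)^m * iteratedDeriv m f t)
          + (((m:ℂ) - (2*(j:ℂ)+2)) * (bc j m : ℂ)) * ((t:ℂ)^m * iteratedDeriv m f t) := by
      intro m _
      show ((bc (j+1) m : ℝ) : ℂ) * _ * _ = _
      rw [bc]
      push_cast
      ring
    rw [Finset.sum_congr rfl hsplit, Finset.sum_add_distrib]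
    congr 1
    · rw [Finset.sum_range_succ']
      simp only [Nat.add_sub_cancel, if_neg (Nat.succ_ne_zero _), if_pos rfl]
      push_cast
      simp
    · rw [Finset.sum_range_succ, bc_big j (j+2) le_rfl]
      simp
  rw [h1, Sd, Sfun, Finset.mul_sum, Finset.mul_sum, ← Finset.sum_sub_distrib,
    ← Finset.sum_add_distrib]
  apply Finset.sum_congr rfl
  intro m _
  have h := cast_mul_pow_sub_one m (t:ℂ)
  linear_combination (-((bc j m : ℂ) * iteratedDeriv m f t)) * h

section Analysis

variable {k : ℕ} {f : ℝ → ℂ}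

lemma itd_diff (hf : ContDiff ℝ ((k:ℕ∞)+1) f) {m : ℕ} (hm : m ≤ k) :
    Differentiable ℝ (iteratedDeriv m f) := by
  apply hf.differentiable_iteratedDeriv
  exact_mod_cast Nat.lt_succ_of_le hm

lemma hasDerivAt_Sfun (hf : ContDiff ℝ ((k:ℕ∞)+1) f) {j : ℕ} (hj : j+1 ≤ k) (t : ℝ) :
    HasDerivAt (Sfun f j) (Sd f j t) t := by
  rw [show Sfun f j = fun t : ℝ => ∑ m ∈ Finset.range (j+2),
      (bc j m : ℂ) * ((t:ℂ)^m * iteratedDeriv m f t) from by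
    funext t; rw [Sfun]; exact Finset.sum_congr rfl fun m _ => by ring]
  rw [Sd]
  apply HasDerivAt.fun_sum
  intro m hm
  have hmk : m ≤ k := by
    simp only [Finset.mem_range] at hm; omega
  have hpow : HasDerivAt (fun t : ℝ => (t:ℂ)^m) ((m:ℂ)*(t:ℂ)^(m-1)) t := by
    exact (hasDerivAt_pow m (t:ℂ)).comp_ofReal
  have hitd : HasDerivAt (iteratedDeriv m f) (iteratedDeriv (m+1) f t) t := by
    have := ((itd_diff hf hmk) t).hasDerivAt
    rwa [show deriv (iteratedDeriv m f) t = iteratedDeriv (m+1) f t from by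
      rw [iteratedDeriv_succ]] at this
  exact (hpow.mul hitd).const_mul _

lemma Sfun_mul_integrable
    (hyp : ∀ ℓ : ℕ, ℓ ≤ k + 1 →
      Integrable (fun t : ℝ => (t : ℂ) ^ ℓ * iteratedDeriv ℓ f t) ∧
      Tendsto (fun t : ℝ => (t : ℂ) ^ ℓ * iteratedDeriv ℓ f t) (cocompact ℝ) (nhds 0))
    {j : ℕ} (hj : j ≤ k) (u : ℝ → ℝ) (hu : Continuous u) (C : ℝ) (hC : ∀ s, |u s| ≤ C) :
    Integrable (fun t => Sfun f j t * ((u t : ℝ) : ℂ)) := by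
  have : (fun t => Sfun f j t * ((u t : ℝ) : ℂ))
      = fun t : ℝ => ∑ m ∈ Finset.range (j+2),
          (bc j m : ℂ) * (((u t : ℝ) : ℂ) * ((t:ℂ)^m * iteratedDeriv m f t)) := by
    funext t
    rw [Sfun, Finset.sum_mul]
    exact Finset.sum_congr rfl fun m _ => by ring
  rw [this]
  apply MeasureTheory.integrable_finset_sum
  intro m hm
  have hmk : m ≤ k + 1 := by simp only [Finset.mem_range] at hm; omega
  apply Integrable.const_mul
  apply Integrable.bdd_mul (c := C) ((hyp m hmk).1)
  · exact (Complex.continuous_ofReal.comp hu).aestronglyMeasurable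
  · exact Filter.Eventually.of_forall fun t => by simpa [Complex.norm_real] using hC t

lemma Sfun_tendsto
    (hyp : ∀ ℓ : ℕ, ℓ ≤ k + 1 →
      Integrable (fun t : ℝ => (t : ℂ) ^ ℓ * iteratedDeriv ℓ f t) ∧
      Tendsto (fun t : ℝ => (t : ℂ) ^ ℓ * iteratedDeriv ℓ f t) (cocompact ℝ) (nhds 0))
    {j : ℕ} (hj : j ≤ k) : Tendsto (Sfun f j) (cocompact ℝ) (nhds 0) := by
  have : (Sfun f j) = fun t : ℝ => ∑ m ∈ Finset.range (j+2),
      (bc j m : ℂ) * ((t:ℂ)^m * iteratedDeriv m f t) := by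
    funext t; rw [Sfun]; exact Finset.sum_congr rfl fun m _ => by ring
  rw [this]
  have h0 : (0 : ℂ) = ∑ m ∈ Finset.range (j+2), (bc j m : ℂ) * 0 := by simp
  rw [h0]
  apply tendsto_finset_sum
  intro m hm
  have hmk : m ≤ k + 1 := by simp only [Finset.mem_range] at hm; omega
  exact ((hyp m hmk).2).const_mul _

lemma integral_deriv_eq_zero (Φ Φd : ℝ → ℂ) (hd : ∀ t, HasDerivAt Φ (Φd t) t)
    (hint : Integrable Φd) (h0 : Tendsto Φ (cocompact ℝ) (nhds 0)) :
    ∫ t : ℝ, Φd t = 0 := by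
  have hsplit : cocompact ℝ = atBot ⊔ atTop := cocompact_eq_atBot_atTop
  have htop : Tendsto Φ atTop (nhds 0) := h0.mono_left (by rw [hsplit]; exact le_sup_right)
  have hbot : Tendsto Φ atBot (nhds 0) := h0.mono_left (by rw [hsplit]; exact le_sup_left)
  have h1 := MeasureTheory.integral_Ioi_of_hasDerivAt_of_tendsto (a := (0:ℝ))
    ((hd 0).continuousAt.continuousWithinAt) (fun x _ => hd x) hint.integrableOn htop
  have h2 := MeasureTheory.integral_Iic_of_hasDerivAt_of_tendsto (a := (0:ℝ))
    ((hd 0).continuousAt.continuousWithinAt) (fun x _ => hd x) hint.integrableOn hbot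
  have h3 := intervalIntegral.integral_Iic_add_Ioi (b := (0:ℝ))
    hint.integrableOn hint.integrableOn
  rw [h1, h2] at h3
  rw [← h3]
  ring

end Analysis

lemma wgt_rec (j : ℕ) : wgt j = -(2*(j:ℝ)+2) * wgt (j+1) := by
  rw [wgt, wgt]
  have hfac : ((j.factorial : ℝ)) ≠ 0 := Nat.cast_ne_zero.2 (Nat.factorial_ne_zero j)
  rw [Nat.factorial_succ]
  push_cast
  field_simp
  ring

section MainStep

variable {k : ℕ} {f : ℝ → ℂ} {v : ℝ}

lemma step_lemma (hf : ContDiff ℝ ((k:ℕ∞)+1) f)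
    (hyp : ∀ ℓ : ℕ, ℓ ≤ k + 1 →
      Integrable (fun t : ℝ => (t : ℂ) ^ ℓ * iteratedDeriv ℓ f t) ∧
      Tendsto (fun t : ℝ => (t : ℂ) ^ ℓ * iteratedDeriv ℓ f t) (cocompact ℝ) (nhds 0))
    (hv : v ≠ 0) {j : ℕ} (hj : j + 1 ≤ k) :
    ∫ t : ℝ, Sfun f j t * ((wgt j * Gb j (t*v) : ℝ) : ℂ)
      = ∫ t : ℝ, Sfun f (j+1) t * ((wgt (j+1) * Gb (j+1) (t*v) : ℝ) : ℂ) := by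
  set Φ : ℝ → ℂ := fun t => Sfun f j t * (((t * Gb (j+1) (t*v) : ℝ)) : ℂ) with hΦ
  set Φd : ℝ → ℂ := fun t => Sfun f (j+1) t * ((Gb (j+1) (t*v) : ℝ) : ℂ)
    + (2*(j:ℂ)+2) * (Sfun f j t * ((Gb j (t*v) : ℝ) : ℂ)) with hΦd
  -- derivative of the real factor
  have hR : ∀ t : ℝ, HasDerivAt (fun t : ℝ => t * Gb (j+1) (t*v))
      ((2*(j:ℝ)+2) * (Gb j (t*v) - Gb (j+1) (t*v))) t := by
    intro t
    have hG : HasDerivAt (fun t : ℝ => Gb (j+1) (t*v)) (-(AInt (j+1) (t*v)) * v) t :=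
      by have := (hasDerivAt_Gb (j+1) (t*v)).comp t (hasDerivAt_mul_const v); exact this
    have := (hasDerivAt_id' t).mul hG
    refine this.congr_deriv ?_
    have hL2 := L2 j (t*v)
    linear_combination -hL2
  have hd : ∀ t : ℝ, HasDerivAt Φ (Φd t) t := by
    intro t
    have h1 := (hasDerivAt_Sfun hf hj t).mul ((hR t).ofReal_comp)
    have e : Φd t = Sd f j t * (((t * Gb (j+1) (t*v) : ℝ)) : ℂ)
        + Sfun f j t * ((((2*(j:ℝ)+2) * (Gb j (t*v) - Gb (j+1) (t*v)) : ℝ)) : ℂ) := by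
      rw [hΦd]
      have hkey := Skey f j t
      push_cast
      linear_combination ((Gb (j+1) (t*v) : ℝ) : ℂ) * hkey
    rw [e]
    exact h1
  -- integrability
  have hint1 : Integrable (fun t : ℝ => Sfun f (j+1) t * ((Gb (j+1) (t*v) : ℝ) : ℂ)) :=
    Sfun_mul_integrable hyp (by omega) (fun t => Gb (j+1) (t*v))
      ((Gb_cont (j+1)).comp (continuous_id.mul continuous_const)) 2
      (fun t => abs_Gb_le (j+1) (t*v))
  have hint2 : Integrable (fun t : ℝ => Sfun f j t * ((Gb j (t*v) : ℝ) : ℂ)) :=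
    Sfun_mul_integrable hyp (by omega) (fun t => Gb j (t*v))
      ((Gb_cont j).comp (continuous_id.mul continuous_const)) 2
      (fun t => abs_Gb_le j (t*v))
  have hint : Integrable Φd := hint1.add (hint2.const_mul _)
  -- limit at cocompact
  have h0 : Tendsto Φ (cocompact ℝ) (nhds 0) := by
    have hbound : ∀ t, ‖Φ t‖ ≤ ‖Sfun f j t‖ * (2*(2*(j:ℝ)+2)/|v|) := by
      intro t
      have hv' : |v| ≠ 0 := abs_ne_zero.2 hv
      have h1 : |t * Gb (j+1) (t*v)| = |(t*v) * Gb (j+1) (t*v)| / |v| := by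
        rw [abs_mul, abs_mul (t*v), abs_mul t v]
        field_simp
      have h2 : ‖Φ t‖ = ‖Sfun f j t‖ * |t * Gb (j+1) (t*v)| := by
        rw [hΦ]
        rw [norm_mul, Complex.norm_real, Real.norm_eq_abs]
      rw [h2, h1]
      gcongr
      exact abs_mul_Gb_le j (t*v)
    have hgt : Tendsto (fun t => ‖Sfun f j t‖ * (2*(2*(j:ℝ)+2)/|v|)) (cocompact ℝ) (nhds 0) := by
      have hS := (Sfun_tendsto hyp (by omega : j ≤ k)).norm
      simp only [norm_zero] at hS
      have := hS.mul_const (2*(2*(j:ℝ)+2)/|v|)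
      simpa using this
    exact squeeze_zero_norm hbound hgt
  have hzero := integral_deriv_eq_zero Φ Φd hd hint h0
  rw [hΦd] at hzero
  rw [MeasureTheory.integral_add hint1 (hint2.const_mul _),
    MeasureTheory.integral_const_mul] at hzero
  -- now rearrange
  have lhs_eq : (∫ t : ℝ, Sfun f j t * ((wgt j * Gb j (t*v) : ℝ) : ℂ))
      = (wgt j : ℂ) * ∫ t : ℝ, Sfun f j t * ((Gb j (t*v) : ℝ) : ℂ) := by
    rw [← MeasureTheory.integral_const_mul]
    congr 1; funext t; push_cast; ring
  have rhs_eq : (∫ t : ℝ, Sfun f (j+1) t * ((wgt (j+1) * Gb (j+1) (t*v) : ℝ) : ℂ))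
      = (wgt (j+1) : ℂ) * ∫ t : ℝ, Sfun f (j+1) t * ((Gb (j+1) (t*v) : ℝ) : ℂ) := by
    rw [← MeasureTheory.integral_const_mul]
    congr 1; funext t; push_cast; ring
  rw [lhs_eq, rhs_eq]
  have hwr : (wgt j : ℂ) = -(2*(j:ℂ)+2) * (wgt (j+1) : ℂ) := by
    have := wgt_rec j
    push_cast [this]
    ring
  rw [hwr]
  have : (∫ t : ℝ, Sfun f (j+1) t * ((Gb (j+1) (t*v) : ℝ) : ℂ))
      = -(2*(j:ℂ)+2) * ∫ t : ℝ, Sfun f j t * ((Gb j (t*v) : ℝ) : ℂ) := by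
    linear_combination hzero
  rw [this]
  ring

end MainStep

section Base

variable {k : ℕ} {f : ℝ → ℂ} {v : ℝ}

lemma sin_div_eq (hv : v ≠ 0) (t : ℝ) : Real.sin (t*v) / v = t * (Gb 0 (t*v) / 2) := by
  by_cases ht : t = 0
  · simp [ht]
  · have htv : t*v ≠ 0 := mul_ne_zero ht hv
    rw [Gb_zero_eq (t*v) htv]
    field_simp

lemma base_lemma (hf : ContDiff ℝ ((k:ℕ∞)+1) f)
    (hyp : ∀ ℓ : ℕ, ℓ ≤ k + 1 →
      Integrable (fun t : ℝ => (t : ℂ) ^ ℓ * iteratedDeriv ℓ f t) ∧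
      Tendsto (fun t : ℝ => (t : ℂ) ^ ℓ * iteratedDeriv ℓ f t) (cocompact ℝ) (nhds 0))
    (hv : v ≠ 0) :
    ∫ t : ℝ, f t * (Real.cos (v * t) : ℂ)
      = ∫ t : ℝ, Sfun f 0 t * ((wgt 0 * Gb 0 (t*v) : ℝ) : ℂ) := by
  have hf1 : ∀ t : ℝ, HasDerivAt f (iteratedDeriv 1 f t) t := by
    intro t
    have hd : Differentiable ℝ f := hf.differentiable (by simp)
    have := (hd t).hasDerivAt
    rw [iteratedDeriv_one]
    exact this
  set Φ : ℝ → ℂ := fun t => f t * ((Real.sin (t*v) / v : ℝ) : ℂ) with hΦ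
  set Φd : ℝ → ℂ := fun t =>
    iteratedDeriv 1 f t * ((Real.sin (t*v) / v : ℝ) : ℂ) + f t * ((Real.cos (t*v) : ℝ) : ℂ)
    with hΦd
  have hR : ∀ t : ℝ, HasDerivAt (fun t : ℝ => Real.sin (t*v) / v) (Real.cos (t*v)) t := by
    intro t
    have h1 : HasDerivAt (fun t : ℝ => Real.sin (t*v)) (Real.cos (t*v) * v) t := by
      simpa [Function.comp_def] using (Real.hasDerivAt_sin (t*v)).comp t (hasDerivAt_mul_const v)
    have := h1.div_const v
    refine this.congr_deriv ?_
    field_simp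
  have hd : ∀ t : ℝ, HasDerivAt Φ (Φd t) t := by
    intro t
    have := (hf1 t).mul ((hR t).ofReal_comp)
    exact this
  have hfeq : (fun t : ℝ => f t) = fun t : ℝ => (t:ℂ)^0 * iteratedDeriv 0 f t := by
    funext t; simp [iteratedDeriv_zero]
  have hint2 : Integrable (fun t : ℝ => f t * ((Real.cos (t*v) : ℝ) : ℂ)) := by
    have heq2 : (fun t : ℝ => f t * ((Real.cos (t*v) : ℝ) : ℂ))
        = fun t : ℝ => ((Real.cos (t*v) : ℝ) : ℂ) * ((t:ℂ)^0 * iteratedDeriv 0 f t) := by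
      funext t; rw [iteratedDeriv_zero, pow_zero, one_mul, mul_comm]
    rw [heq2]
    apply Integrable.bdd_mul (c := 1) ((hyp 0 (by omega)).1)
    · exact (Complex.continuous_ofReal.comp
        ((Real.continuous_cos).comp (continuous_id.mul continuous_const))).aestronglyMeasurable
    · exact Filter.Eventually.of_forall fun t => by rw [Complex.norm_real, Real.norm_eq_abs]; exact abs_cos_le_one' (t*v)
  have hint1 : Integrable (fun t : ℝ => iteratedDeriv 1 f t * ((Real.sin (t*v) / v : ℝ) : ℂ)) := by
    have heq : (fun t : ℝ => iteratedDeriv 1 f t * ((Real.sin (t*v) / v : ℝ) : ℂ))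
        = fun t : ℝ => ((Gb 0 (t*v) / 2 : ℝ) : ℂ) * ((t:ℂ)^1 * iteratedDeriv 1 f t) := by
      funext t
      rw [sin_div_eq hv t]
      push_cast
      ring
    rw [heq]
    apply Integrable.bdd_mul (c := 1) ((hyp 1 (by omega)).1)
    · exact (Complex.continuous_ofReal.comp
        (((Gb_cont 0).comp (continuous_id.mul continuous_const)).div_const 2)).aestronglyMeasurable
    · refine Filter.Eventually.of_forall fun t => ?_
      rw [Complex.norm_real, Real.norm_eq_abs, abs_div]
      have := abs_Gb_le 0 (t*v)
      rw [abs_two]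
      linarith [abs_nonneg (Gb 0 (t*v))]
  have hint : Integrable Φd := hint1.add hint2
  have h0 : Tendsto Φ (cocompact ℝ) (nhds 0) := by
    have hbound : ∀ t, ‖Φ t‖ ≤ ‖f t‖ * (1/|v|) := by
      intro t
      rw [hΦ]
      rw [norm_mul, Complex.norm_real, Real.norm_eq_abs, abs_div]
      gcongr
      exact abs_sin_le_one' _
    have hft : Tendsto f (cocompact ℝ) (nhds 0) := by
      have := (hyp 0 (by omega)).2
      simpa [iteratedDeriv_zero] using this
    have hgt : Tendsto (fun t => ‖f t‖ * (1/|v|)) (cocompact ℝ) (nhds 0) := by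
      have hS := hft.norm
      simp only [norm_zero] at hS
      simpa using hS.mul_const (1/|v|)
    exact squeeze_zero_norm hbound hgt
  have hzero := integral_deriv_eq_zero Φ Φd hd hint h0
  rw [hΦd] at hzero
  rw [MeasureTheory.integral_add hint1 hint2] at hzero
  have hcos : (∫ t : ℝ, f t * (Real.cos (v * t) : ℂ))
      = ∫ t : ℝ, f t * ((Real.cos (t*v) : ℝ) : ℂ) := by
    congr 1; funext t; rw [mul_comm v t]
  rw [hcos]
  have hSeq : (fun t : ℝ => Sfun f 0 t * ((wgt 0 * Gb 0 (t*v) : ℝ) : ℂ))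
      = fun t : ℝ => -(iteratedDeriv 1 f t * ((Real.sin (t*v) / v : ℝ) : ℂ)) := by
    funext t
    rw [Sfun]
    have h2 : Finset.range 2 = {0, 1} := by decide
    rw [h2]
    rw [Finset.sum_insert (by decide), Finset.sum_singleton]
    rw [show bc 0 0 = 0 from by simp [bc], show bc 0 1 = -1 from by simp [bc]]
    rw [sin_div_eq hv t, wgt]
    simp only [Nat.factorial]
    push_cast
    ring
  rw [hSeq]
  rw [MeasureTheory.integral_neg]
  linear_combination hzero
end Base


/-- Lemma 6.2: for every positive integer `k` there is a real polynomial `P` of degree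
`k+1` without constant term such that
`∫ f(t) cos(vt) dt = ∫ (P(𝒪)f)(t) 𝒥_{k+1/2}(tv) dt` for all suitable `f` and all `v ≠ 0`. -/
theorem stmt_2 (k : ℕ) (hk : 0 < k) :
    ∃ P : Polynomial ℝ, P.natDegree = k + 1 ∧ P.coeff 0 = 0 ∧
      ∀ f : ℝ → ℂ, ContDiff ℝ ((k : ℕ∞) + 1) f →
        (∀ ℓ : ℕ, ℓ ≤ k + 1 →
          Integrable (fun t : ℝ => (t : ℂ) ^ ℓ * iteratedDeriv ℓ f t) ∧
          Tendsto (fun t : ℝ => (t : ℂ) ^ ℓ * iteratedDeriv ℓ f t)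
            (cocompact ℝ) (nhds 0)) →
        ∀ v : ℝ, v ≠ 0 →
          ∫ t : ℝ, f t * (Real.cos (v * t) : ℂ) =
            ∫ t : ℝ, PopC P f t * (Jmod k (t * v) : ℂ) := by
  set c : ℝ := (-1:ℝ)^k * Real.sqrt (Real.pi/2) with hc
  have hcne : c ≠ 0 := by
    rw [hc]
    apply mul_ne_zero
    · exact pow_ne_zero _ (by norm_num)
    · positivity
  set a : ℕ → ℝ := fun m => c * bc k m with ha
  set P : Polynomial ℝ := ∑ m ∈ Finset.range (k+2), Polynomial.C (a m) * Polynomial.X ^ m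
    with hP
  have hPcoeff : ∀ n, P.coeff n = a n := by
    intro n
    rw [hP, Polynomial.finset_sum_coeff]
    have : ∀ m ∈ Finset.range (k+2), (Polynomial.C (a m) * Polynomial.X ^ m).coeff n
        = if n = m then a m else 0 := by
      intro m _
      rw [Polynomial.coeff_C_mul, Polynomial.coeff_X_pow]
      simp
    rw [Finset.sum_congr rfl this]
    rw [Finset.sum_ite_eq (Finset.range (k+2)) n a]
    by_cases hn : n ∈ Finset.range (k+2)
    · rw [if_pos hn]
    · rw [if_neg hn]
      simp only [Finset.mem_range] at hn
      simp only [ha]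
      rw [bc_big k n (by omega)]
      ring
  have htop : a (k+1) = -c := by rw [ha]; simp only; rw [bc_top k]; ring
  have hPdeg : P.natDegree = k + 1 := by
    apply le_antisymm
    · apply Polynomial.natDegree_le_iff_coeff_eq_zero.2
      intro m hm
      rw [hPcoeff m, ha]
      simp only
      rw [bc_big k m (by omega)]
      ring
    · apply Polynomial.le_natDegree_of_ne_zero
      rw [hPcoeff (k+1), htop]
      exact neg_ne_zero.2 hcne
  refine ⟨P, hPdeg, ?_, ?_⟩
  · rw [hPcoeff 0, ha]
    simp only
    rw [bc_zero k]
    ring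
  · intro f hf hyp v hv
    have claim : ∀ j, j ≤ k →
        (∫ t : ℝ, f t * (Real.cos (v * t) : ℂ))
          = ∫ t : ℝ, Sfun f j t * ((wgt j * Gb j (t*v) : ℝ) : ℂ) := by
      intro j
      induction j with
      | zero => intro _; exact base_lemma hf hyp hv
      | succ j ih =>
        intro hj
        rw [ih (by omega)]
        exact step_lemma hf hyp hv hj
    rw [claim k le_rfl]
    apply MeasureTheory.integral_congr_ae
    have hne : ∀ᵐ (t : ℝ), t ≠ 0 := by
      refine MeasureTheory.ae_iff.2 ?_
      have : {t : ℝ | ¬ t ≠ 0} = {0} := by ext t; simp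
      rw [this]
      exact measure_singleton 0
    filter_upwards [hne] with t ht
    have htv : t * v ≠ 0 := mul_ne_zero ht hv
    have hJ : Jmod k (t*v) = Real.sqrt (2/Real.pi) * (-1:ℝ)^k * (wgt k * Gb k (t*v)) := by
      rw [Jmod, besselIter_eq_Gb k (t*v) htv]
    have hPop : PopC P f t = (c : ℂ) * Sfun f k t := by
      rw [PopC, hPdeg, Sfun, Finset.mul_sum]
      apply Finset.sum_congr rfl
      intro m _
      rw [hPcoeff m, ha]
      push_cast
      ring
    rw [hPop, hJ]
    have hconst : Real.sqrt (2/Real.pi) * (-1:ℝ)^k * c = 1 := by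
      rw [hc]
      have h1 : ((-1:ℝ)^k) * ((-1:ℝ)^k) = 1 := by
        rw [← pow_add]
        exact Even.neg_one_pow ⟨k, rfl⟩
      have h2 : Real.sqrt (2/Real.pi) * Real.sqrt (Real.pi/2) = 1 := by
        rw [← Real.sqrt_mul (by positivity)]
        rw [show (2/Real.pi) * (Real.pi/2) = 1 from by
          field_simp]
        exact Real.sqrt_one
      calc Real.sqrt (2/Real.pi) * (-1:ℝ)^k * ((-1:ℝ)^k * Real.sqrt (Real.pi/2))
          = (Real.sqrt (2/Real.pi) * Real.sqrt (Real.pi/2)) * ((-1:ℝ)^k * (-1:ℝ)^k) := by ring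
        _ = 1 := by rw [h1, h2]; ring
    have : ((Real.sqrt (2/Real.pi) * (-1:ℝ)^k * (wgt k * Gb k (t*v)) : ℝ) : ℂ)
        = (Real.sqrt (2/Real.pi) * (-1:ℝ)^k : ℝ) * ((wgt k * Gb k (t*v) : ℝ) : ℂ) := by
      push_cast
      ring
    rw [this]
    have hcc : ((Real.sqrt (2/Real.pi) * (-1:ℝ)^k : ℝ) : ℂ) * (c:ℂ) = 1 := by
      rw [← Complex.ofReal_mul]
      rw [hconst]
      exact Complex.ofReal_one
    calc Sfun f k t * ((wgt k * Gb k (t*v) : ℝ) : ℂ)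
        = (((Real.sqrt (2/Real.pi) * (-1:ℝ)^k : ℝ) : ℂ) * (c:ℂ)) *
            (Sfun f k t * ((wgt k * Gb k (t*v) : ℝ) : ℂ)) := by rw [hcc]; ring
      _ = (c:ℂ) * Sfun f k t *
            ((((Real.sqrt (2/Real.pi) * (-1:ℝ)^k : ℝ)) : ℂ) * ((wgt k * Gb k (t*v) : ℝ) : ℂ)) := by
          ring
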